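/- Let G be a finite abelian group of order n, D(G) its generalized dihedral group (assumed non-abelian), \Gamma the commuting graph of D(G), and z = |{g \in G : g^2 = e}|. If z = 1 (i.e., G has odd order), then the metric dimension of \Gamma equals 2n - 3. -/

import Mathlib

/-- The generalized dihedral group `D(G) = G ⋊ C₂`, with `⟨g, false⟩`
representing `(g, 1)` and `⟨g, true⟩` representing `(g, -1)`.
Multiplication is `(g₁, c₁)(g₂, c₂) = (g₁ g₂^{c₁}, c₁ c₂)`, i.e. `-1` acts by inversion. -/
@[ext]
structure GenDihedral (G : Type) where
  g : G
  b : Bool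
  deriving DecidableEq

namespace GenDihedral

variable {G : Type} [CommGroup G]

instance : Mul (GenDihedral G) :=
  ⟨fun a c => ⟨a.g * (if a.b then c.g⁻¹ else c.g), xor a.b c.b⟩⟩

instance : One (GenDihedral G) := ⟨⟨1, false⟩⟩

instance : Inv (GenDihedral G) := ⟨fun a => ⟨if a.b then a.g else a.g⁻¹, a.b⟩⟩

theorem mul_def (a c : GenDihedral G) :
    a * c = ⟨a.g * (if a.b then c.g⁻¹ else c.g), xor a.b c.b⟩ := rfl

theorem one_def : (1 : GenDihedral G) = ⟨1, false⟩ := rfl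

theorem inv_def (a : GenDihedral G) : a⁻¹ = ⟨if a.b then a.g else a.g⁻¹, a.b⟩ := rfl

instance : Group (GenDihedral G) where
  mul_assoc a c d := by
    obtain ⟨g₁, b₁⟩ := a; obtain ⟨g₂, b₂⟩ := c; obtain ⟨g₃, b₃⟩ := d
    cases b₁ <;> cases b₂ <;> cases b₃ <;>
      simp [mul_def, mul_assoc, mul_comm, mul_left_comm, mul_inv, inv_inv]
  one_mul a := by obtain ⟨g, b⟩ := a; cases b <;> simp [mul_def, one_def]
  mul_one a := by obtain ⟨g, b⟩ := a; cases b <;> simp [mul_def, one_def]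
  inv_mul_cancel a := by
    obtain ⟨g, b⟩ := a; cases b <;> simp [mul_def, one_def, inv_def]

instance [Fintype G] : Fintype (GenDihedral G) :=
  Fintype.ofEquiv (G × Bool)
    ⟨fun p => ⟨p.1, p.2⟩, fun x => (x.g, x.b), fun _ => rfl, fun _ => rfl⟩

instance [DecidableEq G] (a c : GenDihedral G) : Decidable (Commute a c) :=
  decidable_of_iff (a * c = c * a) Iff.rfl

end GenDihedral

namespace GenDihedral

/-- The commuting graph of `D(G)`: vertices are the elements of `D(G)`, and two
distinct vertices are adjacent iff they commute. -/
def commGraph (G : Type) [CommGroup G] : SimpleGraph (GenDihedral G) where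
  Adj u v := u ≠ v ∧ u * v = v * u
  symm := ⟨fun _ _ h => ⟨h.1.symm, h.2.symm⟩⟩
  loopless := ⟨fun _ h => h.1 rfl⟩

instance {G : Type} [CommGroup G] [DecidableEq G] : DecidableRel (commGraph G).Adj :=
  fun u v => show Decidable (u ≠ v ∧ u * v = v * u) from instDecidableAnd

end GenDihedral

/-- `W` is a resolving set of `Γ` if every pair of distinct vertices is distinguished
by its vector of graph distances to the vertices of `W`. -/
def IsResolvingSet {V : Type} (Γ : SimpleGraph V) (W : Set V) : Prop :=
  ∀ u v : V, u ≠ v → ∃ w ∈ W, Γ.dist u w ≠ Γ.dist v w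

/-- The metric dimension of `Γ`: the minimum cardinality of a resolving set. -/
noncomputable def metricDim {V : Type} (Γ : SimpleGraph V) : ℕ :=
  sInf {k : ℕ | ∃ W : Finset V, IsResolvingSet Γ ↑W ∧ W.card = k}

/-- The number `sᵢ` of resolving sets of `Γ` of cardinality `i` (the coefficient of `xⁱ`
in the resolving polynomial `β(Γ, x) = Σᵢ sᵢ xⁱ`). -/
noncomputable def numResolvingSets {V : Type} (Γ : SimpleGraph V) (i : ℕ) : ℕ :=
  Set.ncard {W : Finset V | IsResolvingSet Γ ↑W ∧ W.card = i}

set_option linter.unusedSectionVars false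

namespace MDAux

open GenDihedral SimpleGraph

variable {G : Type} [CommGroup G] [DecidableEq G]

lemma adj_ff {g h : G} (hgh : g ≠ h) :
    (commGraph G).Adj ⟨g, false⟩ ⟨h, false⟩ := by
  refine ⟨by simp [GenDihedral.ext_iff, hgh], ?_⟩
  simp [mul_def, mul_comm]

lemma adj_ft_iff (hsq : ∀ g : G, g ^ 2 = 1 → g = 1) {g h : G} :
    (commGraph G).Adj ⟨g, false⟩ ⟨h, true⟩ ↔ g = 1 := by
  constructor
  · rintro ⟨-, hc⟩
    simp only [mul_def, GenDihedral.ext_iff] at hc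
    have h1 : g * h = h * g⁻¹ := by simpa using hc.1
    have h2 : h * g = h * g⁻¹ := by rw [← h1, mul_comm]
    have h3 : g = g⁻¹ := mul_left_cancel h2
    exact hsq g (by rw [pow_two]; nth_rewrite 2 [h3]; exact mul_inv_cancel g)
  · rintro rfl
    refine ⟨by simp [GenDihedral.ext_iff], ?_⟩
    simp [mul_def]

lemma not_adj_tt (hsq : ∀ g : G, g ^ 2 = 1 → g = 1) {g h : G} :
    ¬ (commGraph G).Adj ⟨g, true⟩ ⟨h, true⟩ := by
  rintro ⟨hne, hc⟩
  simp only [mul_def, GenDihedral.ext_iff] at hc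
  have h1 : g * h⁻¹ = h * g⁻¹ := by simpa using hc.1
  have h2 : (g * h⁻¹) ^ 2 = 1 := by
    rw [pow_two]; nth_rewrite 2 [h1]; group
  have := hsq _ h2
  exact hne (by ext <;> simp [mul_inv_eq_one.mp this])

lemma adj_center (hsq : ∀ g : G, g ^ 2 = 1 → g = 1) {v : GenDihedral G}
    (hv : v ≠ ⟨1, false⟩) : (commGraph G).Adj ⟨1, false⟩ v := by
  obtain ⟨h, b⟩ := v
  cases b
  · exact adj_ff (fun hh => hv (by simp [GenDihedral.ext_iff, hh.symm]))
  · exact (adj_ft_iff hsq).mpr rfl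

lemma dist_eq_one {u v : GenDihedral G} (h : (commGraph G).Adj u v) :
    (commGraph G).dist u v = 1 :=
  SimpleGraph.dist_eq_one_iff_adj.mpr h

lemma dist_eq_two (hsq : ∀ g : G, g ^ 2 = 1 → g = 1) {u v : GenDihedral G}
    (hne : u ≠ v) (hnadj : ¬ (commGraph G).Adj u v) :
    (commGraph G).dist u v = 2 := by
  have hu : u ≠ ⟨1, false⟩ := by
    rintro rfl
    exact hnadj (adj_center hsq (Ne.symm hne))
  have hv : v ≠ ⟨1, false⟩ := by
    rintro rfl
    exact hnadj ((adj_center hsq hu).symm)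
  have w : (commGraph G).Walk u v :=
    SimpleGraph.Walk.cons ((adj_center hsq hu).symm)
      (SimpleGraph.Walk.cons (adj_center hsq hv) SimpleGraph.Walk.nil)
  have hle : (commGraph G).dist u v ≤ 2 := by
    simpa using SimpleGraph.dist_le
      (SimpleGraph.Walk.cons ((adj_center hsq hu).symm)
        (SimpleGraph.Walk.cons (adj_center hsq hv) SimpleGraph.Walk.nil))
  have h0 : (commGraph G).dist u v ≠ 0 :=
    SimpleGraph.dist_ne_zero_iff_ne_and_reachable.mpr ⟨hne, ⟨w⟩⟩
  have h1 : (commGraph G).dist u v ≠ 1 :=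
    fun h => hnadj (SimpleGraph.dist_eq_one_iff_adj.mp h)
  omega

lemma dist_pos {u v : GenDihedral G} (hsq : ∀ g : G, g ^ 2 = 1 → g = 1)
    (hne : u ≠ v) : (commGraph G).dist u v ≠ 0 := by
  by_cases h : (commGraph G).Adj u v
  · rw [dist_eq_one h]; omega
  · rw [dist_eq_two hsq hne h]; omega

lemma dist_rot (hsq : ∀ g : G, g ^ 2 = 1 → g = 1) {g : G} (hg : g ≠ 1)
    {w : GenDihedral G} (hw : w ≠ ⟨g, false⟩) :
    (commGraph G).dist ⟨g, false⟩ w = if w.b then 2 else 1 := by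
  obtain ⟨h, b⟩ := w
  cases b
  · have : g ≠ h := fun hh => hw (by simp [GenDihedral.ext_iff, hh.symm])
    simpa using dist_eq_one (adj_ff this)
  · have hne : (⟨g, false⟩ : GenDihedral G) ≠ ⟨h, true⟩ := by simp [GenDihedral.ext_iff]
    have hnadj : ¬ (commGraph G).Adj ⟨g, false⟩ ⟨h, true⟩ :=
      fun hadj => hg ((adj_ft_iff hsq).mp hadj)
    simpa using dist_eq_two hsq hne hnadj

lemma dist_leaf (hsq : ∀ g : G, g ^ 2 = 1 → g = 1) {g : G}
    {w : GenDihedral G} (hw : w ≠ ⟨g, true⟩) :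
    (commGraph G).dist ⟨g, true⟩ w = if w = ⟨1, false⟩ then 1 else 2 := by
  obtain ⟨h, b⟩ := w
  cases b
  · by_cases hh : h = 1
    · subst hh
      simp only [if_pos rfl]
      exact dist_eq_one ((adj_center hsq (by simp [GenDihedral.ext_iff])).symm)
    · have hif : (⟨h, false⟩ : GenDihedral G) ≠ ⟨1, false⟩ := by
        simp [GenDihedral.ext_iff, hh]
      rw [if_neg hif]
      have hne : (⟨g, true⟩ : GenDihedral G) ≠ ⟨h, false⟩ := by simp [GenDihedral.ext_iff]
      have hnadj : ¬ (commGraph G).Adj ⟨g, true⟩ ⟨h, false⟩ :=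
        fun hadj => hh ((adj_ft_iff hsq).mp hadj.symm)
      exact dist_eq_two hsq hne hnadj
  · have hif : (⟨h, true⟩ : GenDihedral G) ≠ ⟨1, false⟩ := by simp [GenDihedral.ext_iff]
    rw [if_neg hif]
    exact dist_eq_two hsq hw.symm (not_adj_tt hsq)

lemma card_genDihedral [Fintype G] :
    Fintype.card (GenDihedral G) = 2 * Fintype.card G := by
  have e : GenDihedral G ≃ G × Bool :=
    ⟨fun x => (x.g, x.b), fun p => ⟨p.1, p.2⟩, fun _ => rfl, fun _ => rfl⟩
  rw [Fintype.card_congr e, Fintype.card_prod, Fintype.card_bool, mul_comm]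

end MDAux

open MDAux

open GenDihedral in
/-- If `z = |{g : g² = e}| = 1` (i.e. `G` has odd order), the metric dimension of the
commuting graph of a non-abelian `D(G)` equals `2n - 3`, where `n = |G|`. -/
theorem stmt15 {G : Type} [CommGroup G] [Fintype G] [DecidableEq G]
    (hna : ∃ g : G, g ^ 2 ≠ 1) (n z : ℕ) (hn : n = Fintype.card G)
    (hz : z = (Finset.univ.filter fun g : G => g ^ 2 = 1).card) (hz1 : z = 1) :
    metricDim (commGraph G) = 2 * n - 3 := by
  classical
  -- squaring has trivial kernel
  have hsq : ∀ g : G, g ^ 2 = 1 → g = 1 := by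
    intro g hg
    obtain ⟨c, hc⟩ := Finset.card_eq_one.mp (hz ▸ hz1 : _)
    have h1 : (1 : G) ∈ Finset.univ.filter (fun g : G => g ^ 2 = 1) := by simp
    have hg' : g ∈ Finset.univ.filter (fun g : G => g ^ 2 = 1) := by simp [hg]
    rw [hc, Finset.mem_singleton] at h1 hg'
    rw [hg', ← h1]
  obtain ⟨a, ha2⟩ := hna
  have ha1 : a ≠ 1 := fun h => ha2 (by rw [h]; simp)
  set e0 : GenDihedral G := ⟨1, false⟩ with he0def
  set a0 : GenDihedral G := ⟨a, false⟩ with ha0def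
  set t0 : GenDihedral G := ⟨1, true⟩ with ht0def
  set r0 : GenDihedral G := ⟨a ^ 2, false⟩ with hr0def
  set s0 : GenDihedral G := ⟨a, true⟩ with hs0def
  have hea : e0 ≠ a0 := by simp [he0def, ha0def, GenDihedral.ext_iff, Ne.symm ha1]
  have het : e0 ≠ t0 := by simp [he0def, ht0def, GenDihedral.ext_iff]
  have hat : a0 ≠ t0 := by simp [ha0def, ht0def, GenDihedral.ext_iff]
  have haa2 : a ≠ a ^ 2 := by
    intro h
    have h' : a * a = a * 1 := by rw [mul_one, ← pow_two]; exact h.symm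
    exact ha1 (mul_left_cancel h')
  -- the resolving set
  set W : Finset (GenDihedral G) := Finset.univ \ {e0, a0, t0} with hWdef
  have hmemW : ∀ x : GenDihedral G, x ∈ W ↔ x ≠ e0 ∧ x ≠ a0 ∧ x ≠ t0 := by
    intro x
    simp [hWdef, not_or]
  have hr0W : r0 ∈ W := by
    rw [hmemW]
    refine ⟨?_, ?_, ?_⟩
    · simp [hr0def, he0def, GenDihedral.ext_iff, ha2]
    · simp [hr0def, ha0def, GenDihedral.ext_iff, Ne.symm haa2]
    · simp [hr0def, ht0def, GenDihedral.ext_iff]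
  have hs0W : s0 ∈ W := by
    rw [hmemW]
    refine ⟨?_, ?_, ?_⟩
    · simp [hs0def, he0def, GenDihedral.ext_iff]
    · simp [hs0def, ha0def, GenDihedral.ext_iff]
    · simp [hs0def, ht0def, GenDihedral.ext_iff, ha1]
  have hcardW : W.card = 2 * n - 3 := by
    rw [hWdef, Finset.card_sdiff_of_subset (Finset.subset_univ _), Finset.card_univ, card_genDihedral, ← hn]
    congr 1
    rw [Finset.card_insert_of_notMem (by simp [hea, het]),
      Finset.card_insert_of_notMem (by simp [hat]), Finset.card_singleton]
  -- key distances
  have d_e0_s0 : (commGraph G).dist e0 s0 = 1 :=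
    dist_eq_one (adj_center hsq (by simp [hs0def, he0def, GenDihedral.ext_iff]))
  have d_e0_r0 : (commGraph G).dist e0 r0 = 1 :=
    dist_eq_one (adj_center hsq (by simp [hr0def, he0def, GenDihedral.ext_iff, ha2]))
  have d_a0_s0 : (commGraph G).dist a0 s0 = 2 := by
    have := dist_rot hsq ha1 (w := s0) (by simp [hs0def, ha0def, GenDihedral.ext_iff])
    simpa [hs0def] using this
  have d_a0_r0 : (commGraph G).dist a0 r0 = 1 := by
    have := dist_rot hsq ha1 (w := r0) (by simp [hr0def, ha0def, GenDihedral.ext_iff, Ne.symm haa2])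
    simpa [hr0def] using this
  have d_t0_r0 : (commGraph G).dist t0 r0 = 2 := by
    have := dist_leaf hsq (g := (1 : G)) (w := r0)
      (by simp [hr0def, ht0def, GenDihedral.ext_iff])
    rw [this, if_neg (by simp [hr0def, he0def, GenDihedral.ext_iff, ha2])]
  -- W resolves
  have hres : IsResolvingSet (commGraph G) ↑W := by
    intro u v huv
    by_cases hu : u ∈ W
    · exact ⟨u, hu, by rw [SimpleGraph.dist_self]; exact fun h => dist_pos hsq (Ne.symm huv) h.symm⟩
    by_cases hv : v ∈ W
    · exact ⟨v, hv, by rw [SimpleGraph.dist_self]; exact dist_pos hsq huv⟩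
    have hu' : u = e0 ∨ u = a0 ∨ u = t0 := by
      by_contra h
      push_neg at h
      exact hu ((hmemW u).mpr h)
    have hv' : v = e0 ∨ v = a0 ∨ v = t0 := by
      by_contra h
      push_neg at h
      exact hv ((hmemW v).mpr h)
    rcases hu' with rfl | rfl | rfl <;> rcases hv' with rfl | rfl | rfl
    · exact absurd rfl huv
    · exact ⟨s0, hs0W, by rw [d_e0_s0, d_a0_s0]; omega⟩
    · exact ⟨r0, hr0W, by rw [d_e0_r0, d_t0_r0]; omega⟩
    · exact ⟨s0, hs0W, by rw [d_e0_s0, d_a0_s0]; omega⟩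
    · exact absurd rfl huv
    · exact ⟨r0, hr0W, by rw [d_a0_r0, d_t0_r0]; omega⟩
    · exact ⟨r0, hr0W, by rw [d_e0_r0, d_t0_r0]; omega⟩
    · exact ⟨r0, hr0W, by rw [d_a0_r0, d_t0_r0]; omega⟩
    · exact absurd rfl huv
  -- lower bound
  have hlow : ∀ k ∈ {k : ℕ | ∃ V : Finset (GenDihedral G), IsResolvingSet (commGraph G) ↑V ∧ V.card = k},
      2 * n - 3 ≤ k := by
    rintro k ⟨V, hresV, rfl⟩
    set R : Finset (GenDihedral G) :=
      (Finset.univ.erase (1 : G)).image (fun g => ⟨g, false⟩) with hRdef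
    set L : Finset (GenDihedral G) :=
      Finset.univ.image (fun g : G => ⟨g, true⟩) with hLdef
    have hinjf : Function.Injective (fun g : G => (⟨g, false⟩ : GenDihedral G)) := by
      intro x y h; simpa [GenDihedral.ext_iff] using h
    have hinjt : Function.Injective (fun g : G => (⟨g, true⟩ : GenDihedral G)) := by
      intro x y h; simpa [GenDihedral.ext_iff] using h
    have hcardR : R.card = n - 1 := by
      rw [hRdef, Finset.card_image_of_injective _ hinjf,
        Finset.card_erase_of_mem (Finset.mem_univ _), Finset.card_univ, hn]
    have hcardL : L.card = n := by
      rw [hLdef, Finset.card_image_of_injective _ hinjt, Finset.card_univ, hn]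
    have hdisj : Disjoint R L := by
      rw [Finset.disjoint_left]
      rintro x hx hy
      simp only [hRdef, hLdef, Finset.mem_image] at hx hy
      obtain ⟨g1, -, rfl⟩ := hx
      obtain ⟨g2, -, h2⟩ := hy
      exact absurd (congrArg GenDihedral.b h2) (by simp)
    have hRV : (R \ V).card ≤ 1 := by
      rw [Finset.card_le_one]
      intro x hx y hy
      by_contra hxy
      obtain ⟨w, hwV, hwd⟩ := hresV x y hxy
      simp only [hRdef, Finset.mem_sdiff, Finset.mem_image, Finset.mem_erase] at hx hy
      obtain ⟨⟨gx, ⟨hgx1, -⟩, rfl⟩, hxV⟩ := hx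
      obtain ⟨⟨gy, ⟨hgy1, -⟩, rfl⟩, hyV⟩ := hy
      have hwx : w ≠ ⟨gx, false⟩ := fun h => hxV (h ▸ hwV)
      have hwy : w ≠ ⟨gy, false⟩ := fun h => hyV (h ▸ hwV)
      exact hwd (by rw [dist_rot hsq hgx1 hwx, dist_rot hsq hgy1 hwy])
    have hLV : (L \ V).card ≤ 1 := by
      rw [Finset.card_le_one]
      intro x hx y hy
      by_contra hxy
      obtain ⟨w, hwV, hwd⟩ := hresV x y hxy
      simp only [hLdef, Finset.mem_sdiff, Finset.mem_image] at hx hy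
      obtain ⟨⟨gx, -, rfl⟩, hxV⟩ := hx
      obtain ⟨⟨gy, -, rfl⟩, hyV⟩ := hy
      have hwx : w ≠ ⟨gx, true⟩ := fun h => hxV (h ▸ hwV)
      have hwy : w ≠ ⟨gy, true⟩ := fun h => hyV (h ▸ hwV)
      exact hwd (by rw [dist_leaf hsq hwx, dist_leaf hsq hwy])
    have hcardRL : (R ∪ L).card = (n - 1) + n := by
      rw [Finset.card_union_of_disjoint hdisj, hcardR, hcardL]
    have hsplit := Finset.card_inter_add_card_sdiff (R ∪ L) V
    have hsub : (R ∪ L) \ V ⊆ (R \ V) ∪ (L \ V) := by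
      rw [Finset.union_sdiff_distrib]
    have h2 : ((R ∪ L) \ V).card ≤ 2 := by
      calc ((R ∪ L) \ V).card ≤ ((R \ V) ∪ (L \ V)).card := Finset.card_le_card hsub
        _ ≤ (R \ V).card + (L \ V).card := Finset.card_union_le _ _
        _ ≤ 2 := by omega
    have hIV : ((R ∪ L) ∩ V).card ≤ V.card :=
      Finset.card_le_card Finset.inter_subset_right
    have hn1 : 1 ≤ n := by rw [hn]; exact Fintype.card_pos
    omega
  exact le_antisymm (Nat.sInf_le ⟨W, hres, hcardW⟩)
    (le_csInf ⟨2 * n - 3, W, hres, hcardW⟩ hlow)
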